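/- (Standard translation) For every InqML formula φ over P there is an FO formula φ*(x) with one free state-sort variable x such that for every inquisitive modal model M = ⟨W,Σ,V⟩, for each of the three relational encodings 𝔐 ∈ { 𝔐^rel(M), 𝔐^lf(M), 𝔐^full(M) }, and for every state s in the second sort of 𝔐: M,s ⊨ φ if and only if 𝔐 ⊨ φ*(s). -/

import Mathlib

/-- Formulas of inquisitive modal logic InqML over atomic propositions `P`. -/
inductive InqForm (P : Type) : Type
  | atom : P → InqForm P
  | bot : InqForm P
  | and : InqForm P → InqForm P → InqForm P
  | impl : InqForm P → InqForm P → InqForm P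
  | idisj : InqForm P → InqForm P → InqForm P
  | box : InqForm P → InqForm P
  | boxplus : InqForm P → InqForm P

/-- An inquisitive modal model `M = ⟨W, Σ, V⟩`. -/
structure InqModel (P : Type) where
  W : Type
  Sig : W → Set (Set W)
  Sig_nonempty : ∀ w, (Sig w).Nonempty
  Sig_downward : ∀ w, ∀ s ∈ Sig w, ∀ t ⊆ s, t ∈ Sig w
  V : P → Set W

/-- `σ(w) = ⋃ Σ(w)`. -/
def InqModel.sigma {P : Type} (M : InqModel P) (w : M.W) : Set M.W :=
  ⋃₀ M.Sig w

/-- Support of a formula at an information state `s ⊆ W`. -/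
def support {P : Type} (M : InqModel P) : InqForm P → Set M.W → Prop
  | .atom p, s => s ⊆ M.V p
  | .bot, s => s = ∅
  | .and φ ψ, s => support M φ s ∧ support M ψ s
  | .impl φ ψ, s => ∀ t ⊆ s, support M φ t → support M ψ t
  | .idisj φ ψ, s => support M φ s ∨ support M ψ s
  | .box φ, s => ∀ w ∈ s, support M φ (M.sigma w)
  | .boxplus φ, s => ∀ w ∈ s, ∀ t ∈ M.Sig w, support M φ t

/-- Truth at a world: `M,w ⊨ φ` iff `M,{w} ⊨ φ`. -/
def truth {P : Type} (M : InqModel P) (w : M.W) (φ : InqForm P) : Prop :=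
  support M φ {w}

/-- Two-sorted first-order formulas over the signature with a world sort, a
state sort, binary relations `E` and `∈` between worlds and states, equality on
both sorts, and a unary predicate for each atom in `P`.  Variables are de
Bruijn indices; `FO P n m` has world-sort variables `Fin n` and state-sort
variables `Fin m`.  (Other connectives and `∃` are definable from `⊥`, `→`, `∀`.) -/
inductive FO (P : Type) : ℕ → ℕ → Type
  | eqW {n m : ℕ} : Fin n → Fin n → FO P n m
  | eqS {n m : ℕ} : Fin m → Fin m → FO P n m
  | rel {n m : ℕ} : Fin n → Fin m → FO P n m
  | mem {n m : ℕ} : Fin n → Fin m → FO P n m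
  | atom {n m : ℕ} : P → Fin n → FO P n m
  | fal {n m : ℕ} : FO P n m
  | imp {n m : ℕ} : FO P n m → FO P n m → FO P n m
  | allW {n m : ℕ} : FO P (n + 1) m → FO P n m
  | allS {n m : ℕ} : FO P n (m + 1) → FO P n m

/-- Satisfaction of a two-sorted first-order formula in the two-sorted
structure with world sort `W`, state sort `↥S`, relations `E` and membership,
and atom predicates given by `V`. -/
def FOsat {P W : Type} (S : Set (Set W)) (E : W → Set (Set W)) (V : P → Set W) :
    {n m : ℕ} → FO P n m → (Fin n → W) → (Fin m → ↥S) → Prop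
  | _, _, .eqW i j, a, _ => a i = a j
  | _, _, .eqS i j, _, b => b i = b j
  | _, _, .rel i j, a, b => (b j : Set W) ∈ E (a i)
  | _, _, .mem i j, a, b => a i ∈ (b j : Set W)
  | _, _, .atom p i, a, _ => a i ∈ V p
  | _, _, .fal, _, _ => False
  | _, _, .imp φ ψ, a, b => FOsat S E V φ a b → FOsat S E V ψ a b
  | _, _, .allW φ, a, b => ∀ w : W, FOsat S E V φ (Fin.cons w a) b
  | _, _, .allS φ, a, b => ∀ s : ↥S, FOsat S E V φ a (Fin.cons s b)

/-- Second sort of the minimal relational encoding `𝔐^rel(M)`: the image of `Σ`. -/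
def Srel {P : Type} (M : InqModel P) : Set (Set M.W) :=
  {s | ∃ w : M.W, s ∈ M.Sig w}

/-- Second sort of the locally full encoding `𝔐^lf(M)`: `{ s ⊆ σ(w) : w ∈ W }`. -/
def Slf {P : Type} (M : InqModel P) : Set (Set M.W) :=
  {s | ∃ w : M.W, s ⊆ M.sigma w}

/-- Second sort of the full encoding `𝔐^full(M)`: the full powerset `℘(W)`. -/
def Sfull {P : Type} (M : InqModel P) : Set (Set M.W) :=
  Set.univ

namespace StdTrans

variable {P : Type}

/-! ### Derived FO connectives -/

def notF {n m : ℕ} (φ : FO P n m) : FO P n m := .imp φ .fal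
def trueF {n m : ℕ} : FO P n m := .imp .fal .fal
def andF {n m : ℕ} (φ ψ : FO P n m) : FO P n m := notF (.imp φ (notF ψ))
def orF {n m : ℕ} (φ ψ : FO P n m) : FO P n m := .imp (notF φ) ψ
def exS {n m : ℕ} (φ : FO P n (m + 1)) : FO P n m := notF (.allS (notF φ))

def bigAnd {n m : ℕ} : List (FO P n m) → FO P n m
  | [] => trueF
  | φ :: L => andF φ (bigAnd L)

/-- `a x ∈ σ(a i)` : there is a state `t` with `(a i) E t` and `a x ∈ t`. -/
def memSig {n m : ℕ} (x i : Fin n) : FO P n m := exS (andF (.rel i 0) (.mem x 0))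

/-- `b t ⊆ b j`. -/
def subF {n m : ℕ} (t j : Fin m) : FO P n m := .allW (.imp (.mem 0 t) (.mem 0 j))

/-- Bound on the size of finite failure witnesses. -/
def bnd : InqForm P → ℕ
  | .atom _ => 1
  | .bot => 1
  | .and φ ψ => max (bnd φ) (bnd ψ)
  | .impl _ ψ => bnd ψ
  | .idisj φ ψ => bnd φ + bnd ψ
  | .box _ => 1
  | .boxplus _ => 1

/-- Nested world quantifiers over `σ(i)`, accumulating variables, ending in an
implication between the `F`/`G`-translations on the accumulated tuple. -/
def impSig (F G : ∀ n m, Fin n → List (Fin n) → FO P n m) :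
    ℕ → ∀ n m, Fin n → List (Fin n) → FO P n m
  | 0, _, _, _, [] => trueF
  | 0, n, m, _, j :: l => .imp (F n m j l) (G n m j l)
  | k + 1, n, m, i, acc =>
      .allW (.imp (memSig 0 i.succ) (impSig F G k (n + 1) m i.succ (0 :: acc.map Fin.succ)))

/-- The three components of the standard translation: at a state variable, at
`σ` of a world variable, and at a finite tuple of world variables. -/
structure Trip (P : Type) where
  s : ∀ n m, Fin m → FO P n m
  g : ∀ n m, Fin n → FO P n m
  f : ∀ n m, Fin n → List (Fin n) → FO P n m

def ST : InqForm P → Trip P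
  | .atom p =>
      ⟨fun _ _ j => .allW (.imp (.mem 0 j) (.atom p 0)),
       fun _ _ i => .allW (.imp (memSig 0 i.succ) (.atom p 0)),
       fun _ _ i l => bigAnd ((i :: l).map fun j => .atom p j)⟩
  | .bot =>
      ⟨fun _ _ j => .allW (.imp (.mem 0 j) .fal),
       fun _ _ i => .allW (.imp (memSig 0 i.succ) .fal),
       fun _ _ _ _ => .fal⟩
  | .and φ ψ =>
      ⟨fun n m j => andF ((ST φ).s n m j) ((ST ψ).s n m j),
       fun n m i => andF ((ST φ).g n m i) ((ST ψ).g n m i),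
       fun n m i l => andF ((ST φ).f n m i l) ((ST ψ).f n m i l)⟩
  | .idisj φ ψ =>
      ⟨fun n m j => orF ((ST φ).s n m j) ((ST ψ).s n m j),
       fun n m i => orF ((ST φ).g n m i) ((ST ψ).g n m i),
       fun n m i l => orF ((ST φ).f n m i l) ((ST ψ).f n m i l)⟩
  | .impl φ ψ =>
      ⟨fun n m j => .allS (.imp (subF 0 j.succ)
          (.imp ((ST φ).s n (m + 1) 0) ((ST ψ).s n (m + 1) 0))),
       fun n m i => impSig ((ST φ).f) ((ST ψ).f) (bnd ψ) n m i [],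
       fun n m i l => bigAnd (((i :: l).sublists).map fun s =>
          match s with
          | [] => trueF
          | j :: l' => .imp ((ST φ).f n m j l') ((ST ψ).f n m j l'))⟩
  | .box φ =>
      ⟨fun n m j => .allW (.imp (.mem 0 j) ((ST φ).g (n + 1) m 0)),
       fun n m i => .allW (.imp (memSig 0 i.succ) ((ST φ).g (n + 1) m 0)),
       fun n m i l => bigAnd ((i :: l).map fun j => (ST φ).g n m j)⟩
  | .boxplus φ =>
      ⟨fun n m j => .allW (.imp (.mem 0 j)
          (.allS (.imp (.rel 0 0) ((ST φ).s (n + 1) (m + 1) 0)))),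
       fun n m i => .allW (.imp (memSig 0 i.succ)
          (.allS (.imp (.rel 0 0) ((ST φ).s (n + 1) (m + 1) 0)))),
       fun n m i l => bigAnd ((i :: l).map fun j =>
          .allS (.imp (.rel j 0) ((ST φ).s n (m + 1) 0)))⟩

/-- The set of worlds listed in `xs`. -/
def lset {W : Type} (xs : List W) : Set W := {w | w ∈ xs}

end StdTrans
namespace StdTrans

variable {P : Type} {M : InqModel P}

lemma lset_nil {W : Type} : (lset ([] : List W)) = (∅ : Set W) := by
  ext x; simp [lset]

lemma mem_lset {W : Type} {x : W} {xs : List W} : x ∈ lset xs ↔ x ∈ xs := Iff.rfl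

lemma supp_empty (M : InqModel P) (φ : InqForm P) : support M φ ∅ := by
  induction φ with
  | atom p => simp [support]
  | bot => simp [support]
  | and φ ψ ihφ ihψ => exact ⟨ihφ, ihψ⟩
  | impl φ ψ ihφ ihψ =>
      intro t ht _
      rw [Set.subset_empty_iff] at ht
      subst ht; exact ihψ
  | idisj φ ψ ihφ ihψ => exact Or.inl ihφ
  | box φ ih => intro w hw; exact absurd hw (Set.notMem_empty w)
  | boxplus φ ih => intro w hw; exact absurd hw (Set.notMem_empty w)

lemma supp_mono (φ : InqForm P) : ∀ {s t : Set M.W}, support M φ s → t ⊆ s → support M φ t := by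
  induction φ with
  | atom p => intro s t h hts; exact hts.trans h
  | bot => intro s t h hts; rw [h, Set.subset_empty_iff] at hts; exact hts
  | and φ ψ ihφ ihψ => intro s t h hts; exact ⟨ihφ h.1 hts, ihψ h.2 hts⟩
  | impl φ ψ ihφ ihψ => intro s t h hts u hut hu; exact h u (hut.trans hts) hu
  | idisj φ ψ ihφ ihψ =>
      intro s t h hts
      rcases h with h | h
      · exact Or.inl (ihφ h hts)
      · exact Or.inr (ihψ h hts)
  | box φ ih => intro s t h hts w hw; exact h w (hts hw)
  | boxplus φ ih => intro s t h hts w hw; exact h w (hts hw)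

/-- Finite witnesses for failure of support, of size bounded by `bnd φ`. -/
lemma witness (φ : InqForm P) :
    ∀ t : Set M.W, ¬ support M φ t →
      ∃ ws : List M.W, ws ≠ [] ∧ (∀ w ∈ ws, w ∈ t) ∧ ws.length ≤ bnd φ ∧
        ¬ support M φ (lset ws) := by
  induction φ with
  | atom p =>
      intro t h
      rw [show support M (.atom p) t = (t ⊆ M.V p) from rfl] at h
      rw [Set.not_subset] at h
      obtain ⟨v, hvt, hv⟩ := h
      refine ⟨[v], by simp, by simpa using hvt, by simp [bnd], ?_⟩
      intro h'
      exact hv (h' (by simp [mem_lset]))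
  | bot =>
      intro t h
      rw [show support M .bot t = (t = ∅) from rfl] at h
      rw [← Set.not_nonempty_iff_eq_empty, not_not] at h
      obtain ⟨v, hv⟩ := h
      refine ⟨[v], by simp, by simpa using hv, by simp [bnd], ?_⟩
      intro h'
      rw [show support M .bot (lset [v]) = (lset [v] = ∅) from rfl] at h'
      exact absurd h' (by intro h''; have : v ∈ lset [v] := by simp [mem_lset]
                          rw [h''] at this; exact this)
  | and φ ψ ihφ ihψ =>
      intro t h
      rw [show support M (.and φ ψ) t = (support M φ t ∧ support M ψ t) from rfl,
        not_and_or] at h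
      rcases h with h | h
      · obtain ⟨ws, hne, hsub, hlen, hfail⟩ := ihφ t h
        exact ⟨ws, hne, hsub, hlen.trans (le_max_left _ _), fun h' => hfail h'.1⟩
      · obtain ⟨ws, hne, hsub, hlen, hfail⟩ := ihψ t h
        exact ⟨ws, hne, hsub, hlen.trans (le_max_right _ _), fun h' => hfail h'.2⟩
  | impl φ ψ ihφ ihψ =>
      intro t h
      rw [show support M (.impl φ ψ) t = (∀ u ⊆ t, support M φ u → support M ψ u) from rfl] at h
      push_neg at h
      obtain ⟨u, hut, hφu, hψu⟩ := h
      obtain ⟨ws, hne, hsub, hlen, hfail⟩ := ihψ u hψu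
      refine ⟨ws, hne, fun w hw => hut (hsub w hw), hlen, ?_⟩
      intro h'
      exact hfail (h' (lset ws) (subset_refl _) (supp_mono φ hφu (fun w hw => hsub w hw)))
  | idisj φ ψ ihφ ihψ =>
      intro t h
      rw [show support M (.idisj φ ψ) t = (support M φ t ∨ support M ψ t) from rfl] at h
      push_neg at h
      obtain ⟨ws1, hne1, hsub1, hlen1, hfail1⟩ := ihφ t h.1
      obtain ⟨ws2, hne2, hsub2, hlen2, hfail2⟩ := ihψ t h.2
      refine ⟨ws1 ++ ws2, by simp [hne1], ?_, ?_, ?_⟩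
      · intro w hw; rcases List.mem_append.1 hw with hw | hw
        · exact hsub1 w hw
        · exact hsub2 w hw
      · simpa [bnd] using Nat.add_le_add hlen1 hlen2
      · rintro (h' | h')
        · exact hfail1 (supp_mono φ h' (fun w hw => List.mem_append.2 (Or.inl hw)))
        · exact hfail2 (supp_mono ψ h' (fun w hw => List.mem_append.2 (Or.inr hw)))
  | box φ ih =>
      intro t h
      rw [show support M (.box φ) t = (∀ w ∈ t, support M φ (M.sigma w)) from rfl] at h
      push_neg at h
      obtain ⟨w, hwt, hw⟩ := h
      refine ⟨[w], by simp, by simpa using hwt, by simp [bnd], ?_⟩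
      intro h'
      exact hw (h' w (by simp [mem_lset]))
  | boxplus φ ih =>
      intro t h
      rw [show support M (.boxplus φ) t
        = (∀ w ∈ t, ∀ u ∈ M.Sig w, support M φ u) from rfl] at h
      push_neg at h
      obtain ⟨w, hwt, u, hu, hfail⟩ := h
      refine ⟨[w], by simp, by simpa using hwt, by simp [bnd], ?_⟩
      intro h'
      exact hfail (h' w (by simp [mem_lset]) u hu)

end StdTrans
namespace StdTrans

variable {P : Type} {M : InqModel P} {S : Set (Set M.W)}

lemma sat_trueF {n m : ℕ} {a : Fin n → M.W} {b : Fin m → ↥S} :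
    FOsat S M.Sig M.V trueF a b := by
  intro h; exact h

lemma sat_notF {n m : ℕ} {φ : FO P n m} {a : Fin n → M.W} {b : Fin m → ↥S} :
    FOsat S M.Sig M.V (notF φ) a b ↔ ¬ FOsat S M.Sig M.V φ a b := Iff.rfl

lemma sat_andF {n m : ℕ} {φ ψ : FO P n m} {a : Fin n → M.W} {b : Fin m → ↥S} :
    FOsat S M.Sig M.V (andF φ ψ) a b ↔
      (FOsat S M.Sig M.V φ a b ∧ FOsat S M.Sig M.V ψ a b) := by
  rw [show FOsat S M.Sig M.V (andF φ ψ) a b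
    = ((FOsat S M.Sig M.V φ a b → (FOsat S M.Sig M.V ψ a b → False)) → False) from rfl]
  tauto

lemma sat_orF {n m : ℕ} {φ ψ : FO P n m} {a : Fin n → M.W} {b : Fin m → ↥S} :
    FOsat S M.Sig M.V (orF φ ψ) a b ↔
      (FOsat S M.Sig M.V φ a b ∨ FOsat S M.Sig M.V ψ a b) := by
  rw [show FOsat S M.Sig M.V (orF φ ψ) a b
    = ((FOsat S M.Sig M.V φ a b → False) → FOsat S M.Sig M.V ψ a b) from rfl]
  tauto

lemma sat_exS {n m : ℕ} {φ : FO P n (m + 1)} {a : Fin n → M.W} {b : Fin m → ↥S} :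
    FOsat S M.Sig M.V (exS φ) a b ↔ ∃ s : ↥S, FOsat S M.Sig M.V φ a (Fin.cons s b) := by
  rw [show FOsat S M.Sig M.V (exS φ) a b
    = ((∀ s : ↥S, FOsat S M.Sig M.V φ a (Fin.cons s b) → False) → False) from rfl]
  constructor
  · intro h
    by_contra h'
    push_neg at h'
    exact h fun s hs => h' s hs
  · rintro ⟨s, hs⟩ h
    exact h s hs

lemma sat_bigAnd {n m : ℕ} {L : List (FO P n m)} {a : Fin n → M.W} {b : Fin m → ↥S} :
    FOsat S M.Sig M.V (bigAnd L) a b ↔ ∀ φ ∈ L, FOsat S M.Sig M.V φ a b := by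
  induction L with
  | nil => exact iff_of_true sat_trueF (by simp)
  | cons φ L ih =>
      rw [show bigAnd (φ :: L) = andF φ (bigAnd L) from rfl, sat_andF, ih]
      simp

lemma sat_memSig (hsig : ∀ w, M.Sig w ⊆ S) {n m : ℕ} (x i : Fin n)
    {a : Fin n → M.W} {b : Fin m → ↥S} :
    FOsat S M.Sig M.V (memSig x i) a b ↔ a x ∈ M.sigma (a i) := by
  rw [memSig, sat_exS]
  constructor
  · rintro ⟨s, hs⟩
    rw [sat_andF] at hs
    exact ⟨(s : Set M.W), hs.1, hs.2⟩
  · rintro ⟨t, ht, hxt⟩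
    refine ⟨⟨t, hsig _ ht⟩, ?_⟩
    rw [sat_andF]
    exact ⟨ht, hxt⟩

lemma sat_subF {n m : ℕ} (t j : Fin m) {a : Fin n → M.W} {b : Fin m → ↥S} :
    FOsat S M.Sig M.V (subF t j) a b ↔ ((b t : Set M.W) ⊆ (b j : Set M.W)) :=
  ⟨fun h x hx => h x hx, fun h _x hx => h hx⟩

end StdTrans
namespace StdTrans

variable {P : Type} {M : InqModel P} {S : Set (Set M.W)}

lemma sat_imp {n m : ℕ} {φ ψ : FO P n m} {a : Fin n → M.W} {b : Fin m → ↥S} :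
    FOsat S M.Sig M.V (.imp φ ψ) a b ↔
      (FOsat S M.Sig M.V φ a b → FOsat S M.Sig M.V ψ a b) := Iff.rfl

lemma sat_allW {n m : ℕ} {φ : FO P (n + 1) m} {a : Fin n → M.W} {b : Fin m → ↥S} :
    FOsat S M.Sig M.V (.allW φ) a b ↔
      (∀ w : M.W, FOsat S M.Sig M.V φ (Fin.cons w a) b) := Iff.rfl

lemma sat_allS {n m : ℕ} {φ : FO P n (m + 1)} {a : Fin n → M.W} {b : Fin m → ↥S} :
    FOsat S M.Sig M.V (.allS φ) a b ↔
      (∀ s : ↥S, FOsat S M.Sig M.V φ a (Fin.cons s b)) := Iff.rfl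

/-- Correctness of `impSig`, assuming correctness of the tuple translations of
`φ` and `ψ`. -/
lemma sat_impSig (hsig : ∀ w, M.Sig w ⊆ S) (φ ψ : InqForm P)
    (hφ : ∀ (n m : ℕ) (i : Fin n) (l : List (Fin n)) (a : Fin n → M.W) (b : Fin m → ↥S),
      support M φ (lset (List.map a (i :: l))) ↔ FOsat S M.Sig M.V ((ST φ).f n m i l) a b)
    (hψ : ∀ (n m : ℕ) (i : Fin n) (l : List (Fin n)) (a : Fin n → M.W) (b : Fin m → ↥S),
      support M ψ (lset (List.map a (i :: l))) ↔ FOsat S M.Sig M.V ((ST ψ).f n m i l) a b) :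
    ∀ (k n m : ℕ) (i : Fin n) (acc : List (Fin n)) (a : Fin n → M.W) (b : Fin m → ↥S),
      FOsat S M.Sig M.V (impSig ((ST φ).f) ((ST ψ).f) k n m i acc) a b ↔
        ∀ ws : List M.W, ws.length = k → (∀ w ∈ ws, w ∈ M.sigma (a i)) →
          (support M φ (lset (ws ++ List.map a acc)) →
            support M ψ (lset (ws ++ List.map a acc))) := by
  intro k
  induction k with
  | zero =>
      intro n m i acc a b
      match acc with
      | [] =>
          simp only [impSig]
          constructor
          · intro _ ws hl _ _
            have : ws = [] := List.length_eq_zero_iff.mp hl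
            subst this
            simpa [lset_nil] using supp_empty M ψ
          · intro _; exact sat_trueF
      | j :: l =>
          simp only [impSig]
          rw [sat_imp, ← hφ, ← hψ]
          constructor
          · intro h ws hl _
            have : ws = [] := List.length_eq_zero_iff.mp hl
            subst this
            simpa using h
          · intro h
            simpa using h [] rfl (by simp)
  | succ k ih =>
      intro n m i acc a b
      simp only [impSig]
      have key : ∀ w : M.W,
          List.map (Fin.cons w a) ((0 : Fin (n + 1)) :: acc.map Fin.succ)
            = w :: List.map a acc := by
        intro w
        simp [List.map_map, Function.comp, Fin.cons_succ]
      rw [sat_allW]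
      constructor
      · intro h ws hlen hmem
        match ws with
        | [] => simp at hlen
        | w :: ws' =>
            have hw : w ∈ M.sigma (a i) := hmem w (by simp)
            have h1 := h w
            rw [sat_imp] at h1
            have h2 := h1 ((sat_memSig hsig 0 i.succ).mpr (by simpa using hw))
            rw [ih (n + 1) m i.succ ((0 : Fin (n + 1)) :: acc.map Fin.succ)
              (Fin.cons w a) b] at h2
            have h3 := h2 ws' (by simpa using hlen)
              (fun w' hw' => by simpa using hmem w' (by simp [hw']))
            rw [key w] at h3
            have hset : lset ((w :: ws') ++ List.map a acc)
                = lset (ws' ++ w :: List.map a acc) := by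
              ext x; simp [lset]; tauto
            rw [hset]
            exact h3
      · intro h w
        rw [sat_imp]
        intro hmw
        have hw : w ∈ M.sigma (a i) := by
          simpa using (sat_memSig hsig (0 : Fin (n + 1)) i.succ).mp hmw
        rw [ih (n + 1) m i.succ ((0 : Fin (n + 1)) :: acc.map Fin.succ) (Fin.cons w a) b]
        intro ws hlen hsub
        rw [key w]
        have hset : lset (ws ++ w :: List.map a acc)
            = lset ((w :: ws) ++ List.map a acc) := by
          ext x; simp [lset]; tauto
        rw [hset]
        refine h (w :: ws) (by simp [hlen]) ?_
        intro w' hw'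
        rcases List.mem_cons.mp hw' with h' | h'
        · subst h'; exact hw
        · simpa using hsub w' h'

end StdTrans
namespace StdTrans

variable {P : Type} {M : InqModel P} {S : Set (Set M.W)}

lemma supp_atom {p : P} {t : Set M.W} : support M (.atom p) t ↔ t ⊆ M.V p := Iff.rfl
lemma supp_bot {t : Set M.W} : support M .bot t ↔ t = ∅ := Iff.rfl
lemma supp_and {φ ψ : InqForm P} {t : Set M.W} :
    support M (.and φ ψ) t ↔ support M φ t ∧ support M ψ t := Iff.rfl
lemma supp_impl {φ ψ : InqForm P} {t : Set M.W} :
    support M (.impl φ ψ) t ↔ ∀ u ⊆ t, support M φ u → support M ψ u := Iff.rfl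
lemma supp_idisj {φ ψ : InqForm P} {t : Set M.W} :
    support M (.idisj φ ψ) t ↔ support M φ t ∨ support M ψ t := Iff.rfl
lemma supp_box {φ : InqForm P} {t : Set M.W} :
    support M (.box φ) t ↔ ∀ w ∈ t, support M φ (M.sigma w) := Iff.rfl
lemma supp_boxplus {φ : InqForm P} {t : Set M.W} :
    support M (.boxplus φ) t ↔ ∀ w ∈ t, ∀ u ∈ M.Sig w, support M φ u := Iff.rfl

theorem ST_correct (hdc : ∀ s ∈ S, ∀ t ⊆ s, t ∈ S) (hsig : ∀ w, M.Sig w ⊆ S)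
    (φ : InqForm P) :
    (∀ (n m : ℕ) (j : Fin m) (a : Fin n → M.W) (b : Fin m → ↥S),
       support M φ ((b j : Set M.W)) ↔ FOsat S M.Sig M.V ((ST φ).s n m j) a b)
  ∧ (∀ (n m : ℕ) (i : Fin n) (a : Fin n → M.W) (b : Fin m → ↥S),
       support M φ (M.sigma (a i)) ↔ FOsat S M.Sig M.V ((ST φ).g n m i) a b)
  ∧ (∀ (n m : ℕ) (i : Fin n) (l : List (Fin n)) (a : Fin n → M.W) (b : Fin m → ↥S),
       support M φ (lset (List.map a (i :: l))) ↔ FOsat S M.Sig M.V ((ST φ).f n m i l) a b) := by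
  induction φ with
  | atom p =>
      refine ⟨?_, ?_, ?_⟩
      · intro n m j a b
        simp only [ST]
        exact ⟨fun h w hw => h hw, fun h x hx => h x hx⟩
      · intro n m i a b
        simp only [ST]
        rw [sat_allW]
        constructor
        · intro h w
          rw [sat_imp]
          intro hw
          have hmem := (sat_memSig hsig (0 : Fin (n + 1)) i.succ).mp hw
          simp only [Fin.cons_zero, Fin.cons_succ] at hmem
          exact h hmem
        · intro h x hx
          have h1 := h x
          rw [sat_imp] at h1
          exact h1 ((sat_memSig hsig (0 : Fin (n + 1)) i.succ).mpr (by simpa using hx))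
      · intro n m i l a b
        simp only [ST]
        rw [sat_bigAnd]
        constructor
        · intro h f hf
          obtain ⟨j, hj, rfl⟩ := List.mem_map.mp hf
          exact h (show a j ∈ lset (List.map a (i :: l)) from
            mem_lset.mpr (List.mem_map.mpr ⟨j, hj, rfl⟩))
        · intro h x hx
          obtain ⟨j, hj, rfl⟩ := List.mem_map.mp (mem_lset.mp hx)
          exact h (.atom p j) (List.mem_map.mpr ⟨j, hj, rfl⟩)
  | bot =>
      refine ⟨?_, ?_, ?_⟩
      · intro n m j a b
        simp only [ST]
        rw [supp_bot, sat_allW]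
        constructor
        · intro h w
          rw [sat_imp]
          intro hw
          have hw' : w ∈ (b j : Set M.W) := hw
          rw [h] at hw'
          exact hw'
        · intro h
          rw [Set.eq_empty_iff_forall_notMem]
          intro w hw
          have h1 := h w
          rw [sat_imp] at h1
          exact h1 hw
      · intro n m i a b
        simp only [ST]
        rw [supp_bot, sat_allW]
        constructor
        · intro h w
          rw [sat_imp]
          intro hw
          have hmem := (sat_memSig hsig (0 : Fin (n + 1)) i.succ).mp hw
          simp only [Fin.cons_zero, Fin.cons_succ] at hmem
          rw [h] at hmem
          exact hmem
        · intro h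
          rw [Set.eq_empty_iff_forall_notMem]
          intro w hw
          have h1 := h w
          rw [sat_imp] at h1
          exact h1 ((sat_memSig hsig (0 : Fin (n + 1)) i.succ).mpr (by simpa using hw))
      · intro n m i l a b
        simp only [ST]
        rw [supp_bot]
        constructor
        · intro h
          have : a i ∈ lset (List.map a (i :: l)) := mem_lset.mpr (by simp)
          rw [h] at this
          exact this
        · intro h
          exact h.elim
  | and φ ψ ihφ ihψ =>
      refine ⟨?_, ?_, ?_⟩
      · intro n m j a b
        simp only [ST]
        rw [supp_and, sat_andF]
        exact and_congr (ihφ.1 n m j a b) (ihψ.1 n m j a b)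
      · intro n m i a b
        simp only [ST]
        rw [supp_and, sat_andF]
        exact and_congr (ihφ.2.1 n m i a b) (ihψ.2.1 n m i a b)
      · intro n m i l a b
        simp only [ST]
        rw [supp_and, sat_andF]
        exact and_congr (ihφ.2.2 n m i l a b) (ihψ.2.2 n m i l a b)
  | idisj φ ψ ihφ ihψ =>
      refine ⟨?_, ?_, ?_⟩
      · intro n m j a b
        simp only [ST]
        rw [supp_idisj, sat_orF]
        exact or_congr (ihφ.1 n m j a b) (ihψ.1 n m j a b)
      · intro n m i a b
        simp only [ST]
        rw [supp_idisj, sat_orF]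
        exact or_congr (ihφ.2.1 n m i a b) (ihψ.2.1 n m i a b)
      · intro n m i l a b
        simp only [ST]
        rw [supp_idisj, sat_orF]
        exact or_congr (ihφ.2.2 n m i l a b) (ihψ.2.2 n m i l a b)
  | impl φ ψ ihφ ihψ =>
      refine ⟨?_, ?_, ?_⟩
      · intro n m j a b
        simp only [ST]
        rw [supp_impl, sat_allS]
        constructor
        · intro h s
          rw [sat_imp]
          intro hs
          have hsub := (sat_subF (0 : Fin (m + 1)) j.succ).mp hs
          simp only [Fin.cons_zero, Fin.cons_succ] at hsub
          rw [sat_imp]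
          intro hφs
          exact (ihψ.1 n (m + 1) 0 a (Fin.cons s b)).mp
            (h (s : Set M.W) hsub ((ihφ.1 n (m + 1) 0 a (Fin.cons s b)).mpr hφs))
        · intro h t hts hφt
          have htS : t ∈ S := hdc _ (b j).2 t hts
          have h1 := h ⟨t, htS⟩
          rw [sat_imp] at h1
          have h2 := h1 ((sat_subF (0 : Fin (m + 1)) j.succ).mpr (by simpa using hts))
          rw [sat_imp] at h2
          exact (ihψ.1 n (m + 1) 0 a (Fin.cons ⟨t, htS⟩ b)).mpr
            (h2 ((ihφ.1 n (m + 1) 0 a (Fin.cons ⟨t, htS⟩ b)).mp hφt))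
      · intro n m i a b
        simp only [ST]
        have H := sat_impSig hsig φ ψ ihφ.2.2 ihψ.2.2 (bnd ψ) n m i [] a b
        simp only [List.map_nil, List.append_nil] at H
        rw [H, supp_impl]
        constructor
        · intro h ws _ hmem hφws
          exact h (lset ws) (fun x hx => hmem x (mem_lset.mp hx)) hφws
        · intro h t ht hφt
          by_contra hψt
          obtain ⟨ws0, hne, hsub, hlen, hfail⟩ := witness ψ t hψt
          set w0 := ws0.head hne with hw0
          set ws := ws0 ++ List.replicate (bnd ψ - ws0.length) w0 with hws
          have hlset : lset ws = lset ws0 := by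
            ext x
            simp only [mem_lset, hws, List.mem_append, List.mem_replicate]
            constructor
            · rintro (hx | ⟨-, rfl⟩)
              · exact hx
              · exact List.head_mem hne
            · intro hx
              exact Or.inl hx
          have hlen' : ws.length = bnd ψ := by
            simp only [hws, List.length_append, List.length_replicate]
            omega
          have hmem' : ∀ w ∈ ws, w ∈ M.sigma (a i) := by
            intro w hw
            have : w ∈ lset ws0 := by rw [← hlset]; exact hw
            exact ht (hsub w (mem_lset.mp this))
          have hφws : support M φ (lset ws) := by
            rw [hlset]
            exact supp_mono φ hφt (fun x hx => hsub x (mem_lset.mp hx))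
          have := h ws hlen' hmem' hφws
          rw [hlset] at this
          exact hfail this
      · intro n m i l a b
        simp only [ST]
        rw [supp_impl, sat_bigAnd]
        constructor
        · intro h f hf
          obtain ⟨s, hs, rfl⟩ := List.mem_map.mp hf
          cases s with
          | nil => exact sat_trueF
          | cons j l' =>
              show FOsat S M.Sig M.V (.imp ((ST φ).f n m j l') ((ST ψ).f n m j l')) a b
              rw [sat_imp, ← ihφ.2.2, ← ihψ.2.2]
              intro hφ'
              have hsl : List.Sublist (j :: l') (i :: l) := List.mem_sublists.mp hs
              have hsubset : lset (List.map a (j :: l')) ⊆ lset (List.map a (i :: l)) := by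
                intro x hx
                exact mem_lset.mpr ((hsl.map a).subset (mem_lset.mp hx))
              exact h _ hsubset hφ'
        · intro h t ht hφt
          obtain ⟨s, hsl, hset⟩ : ∃ s, List.Sublist s (i :: l) ∧ lset (List.map a s) = t := by
            classical
            refine ⟨(i :: l).filter (fun j => decide (a j ∈ t)), List.filter_sublist, ?_⟩
            ext x
            simp only [mem_lset, List.mem_map]
            constructor
            · rintro ⟨j, hj, rfl⟩
              simpa using List.of_mem_filter hj
            · intro hx
              obtain ⟨j, hj, rfl⟩ := List.mem_map.mp (mem_lset.mp (ht hx))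
              exact ⟨j, List.mem_filter.mpr ⟨hj, by simpa using hx⟩, rfl⟩
          cases s with
          | nil =>
              rw [← hset]
              simpa [lset_nil] using supp_empty M ψ
          | cons j l' =>
              have hmem : (j :: l') ∈ (i :: l).sublists := List.mem_sublists.mpr hsl
              have hsat := h _ (List.mem_map.mpr ⟨j :: l', hmem, rfl⟩)
              have hsat' : FOsat S M.Sig M.V
                  (.imp ((ST φ).f n m j l') ((ST ψ).f n m j l')) a b := hsat
              rw [sat_imp, ← ihφ.2.2, ← ihψ.2.2] at hsat'
              rw [← hset]
              exact hsat' (by rw [hset]; exact hφt)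
  | box φ ihφ =>
      refine ⟨?_, ?_, ?_⟩
      · intro n m j a b
        simp only [ST]
        rw [supp_box, sat_allW]
        constructor
        · intro h w
          rw [sat_imp]
          intro hw
          exact (ihφ.2.1 (n + 1) m 0 (Fin.cons w a) b).mp (h w hw)
        · intro h w hw
          have h1 := h w
          rw [sat_imp] at h1
          exact (ihφ.2.1 (n + 1) m 0 (Fin.cons w a) b).mpr (h1 hw)
      · intro n m i a b
        simp only [ST]
        rw [supp_box, sat_allW]
        constructor
        · intro h w
          rw [sat_imp]
          intro hw
          have hmem := (sat_memSig hsig (0 : Fin (n + 1)) i.succ).mp hw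
          simp only [Fin.cons_zero, Fin.cons_succ] at hmem
          exact (ihφ.2.1 (n + 1) m 0 (Fin.cons w a) b).mp (h w hmem)
        · intro h w hw
          have h1 := h w
          rw [sat_imp] at h1
          exact (ihφ.2.1 (n + 1) m 0 (Fin.cons w a) b).mpr
            (h1 ((sat_memSig hsig (0 : Fin (n + 1)) i.succ).mpr (by simpa using hw)))
      · intro n m i l a b
        simp only [ST]
        rw [supp_box, sat_bigAnd]
        constructor
        · intro h f hf
          obtain ⟨j, hj, rfl⟩ := List.mem_map.mp hf
          exact (ihφ.2.1 n m j a b).mp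
            (h (a j) (mem_lset.mpr (List.mem_map.mpr ⟨j, hj, rfl⟩)))
        · intro h w hw
          obtain ⟨j, hj, rfl⟩ := List.mem_map.mp (mem_lset.mp hw)
          exact (ihφ.2.1 n m j a b).mpr (h _ (List.mem_map.mpr ⟨j, hj, rfl⟩))
  | boxplus φ ihφ =>
      refine ⟨?_, ?_, ?_⟩
      · intro n m j a b
        simp only [ST]
        rw [supp_boxplus, sat_allW]
        constructor
        · intro h w
          rw [sat_imp]
          intro hw
          rw [sat_allS]
          intro s
          rw [sat_imp]
          intro hrel
          exact (ihφ.1 (n + 1) (m + 1) 0 (Fin.cons w a) (Fin.cons s b)).mp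
            (h w hw (s : Set M.W) hrel)
        · intro h w hw t htw
          have h1 := h w
          rw [sat_imp] at h1
          have h2 := h1 hw
          rw [sat_allS] at h2
          have h3 := h2 ⟨t, hsig w htw⟩
          rw [sat_imp] at h3
          exact (ihφ.1 (n + 1) (m + 1) 0 (Fin.cons w a)
            (Fin.cons ⟨t, hsig w htw⟩ b)).mpr (h3 htw)
      · intro n m i a b
        simp only [ST]
        rw [supp_boxplus, sat_allW]
        constructor
        · intro h w
          rw [sat_imp]
          intro hw
          have hmem := (sat_memSig hsig (0 : Fin (n + 1)) i.succ).mp hw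
          simp only [Fin.cons_zero, Fin.cons_succ] at hmem
          rw [sat_allS]
          intro s
          rw [sat_imp]
          intro hrel
          exact (ihφ.1 (n + 1) (m + 1) 0 (Fin.cons w a) (Fin.cons s b)).mp
            (h w hmem (s : Set M.W) hrel)
        · intro h w hw t htw
          have h1 := h w
          rw [sat_imp] at h1
          have h2 := h1 ((sat_memSig hsig (0 : Fin (n + 1)) i.succ).mpr (by simpa using hw))
          rw [sat_allS] at h2
          have h3 := h2 ⟨t, hsig w htw⟩
          rw [sat_imp] at h3
          exact (ihφ.1 (n + 1) (m + 1) 0 (Fin.cons w a)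
            (Fin.cons ⟨t, hsig w htw⟩ b)).mpr (h3 htw)
      · intro n m i l a b
        simp only [ST]
        rw [supp_boxplus, sat_bigAnd]
        constructor
        · intro h f hf
          obtain ⟨j, hj, rfl⟩ := List.mem_map.mp hf
          rw [sat_allS]
          intro s
          rw [sat_imp]
          intro hrel
          exact (ihφ.1 n (m + 1) 0 a (Fin.cons s b)).mp
            (h (a j) (mem_lset.mpr (List.mem_map.mpr ⟨j, hj, rfl⟩)) (s : Set M.W) hrel)
        · intro h w hw t htw
          obtain ⟨j, hj, rfl⟩ := List.mem_map.mp (mem_lset.mp hw)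
          have hf := h _ (List.mem_map.mpr ⟨j, hj, rfl⟩)
          rw [sat_allS] at hf
          have h3 := hf ⟨t, hsig _ htw⟩
          rw [sat_imp] at h3
          exact (ihφ.1 n (m + 1) 0 a (Fin.cons ⟨t, hsig _ htw⟩ b)).mpr (h3 htw)

end StdTrans
/-- **Standard translation**: for each InqML formula `φ` there is a two-sorted
FO formula `φ*(x)` with one free state-sort variable such that, over each of the
three relational encodings `𝔐^rel(M)`, `𝔐^lf(M)`, `𝔐^full(M)` of any
inquisitive modal model `M` (which share `E` given by `wEs ⇔ s ∈ Σ(w)`,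
membership `∈`, and `P_i = V(p_i)`, and differ only in the second sort `S`):
`M,s ⊨ φ` iff `𝔐 ⊨ φ*(s)` for every state `s` of the second sort. -/
theorem standard_translation {P : Type} (φ : InqForm P) :
    ∃ φs : FO P 0 1, ∀ (M : InqModel P) (S : Set (Set M.W)),
      (S = Srel M ∨ S = Slf M ∨ S = Sfull M) →
      ∀ s : ↥S, (support M φ (s : Set M.W) ↔
        FOsat S M.Sig M.V φs (fun i => i.elim0) (fun _ => s)) := by
  refine ⟨(StdTrans.ST φ).s 0 1 0, ?_⟩
  intro M S hS s
  have hdc : ∀ u ∈ S, ∀ t ⊆ u, t ∈ S := by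
    rcases hS with rfl | rfl | rfl
    · rintro u ⟨w, hw⟩ t ht
      exact ⟨w, M.Sig_downward w u hw t ht⟩
    · rintro u ⟨w, hw⟩ t ht
      exact ⟨w, ht.trans hw⟩
    · intro u _ t _
      exact Set.mem_univ t
  have hsig : ∀ w, M.Sig w ⊆ S := by
    rcases hS with rfl | rfl | rfl
    · intro w t ht
      exact ⟨w, ht⟩
    · intro w t ht
      exact ⟨w, Set.subset_sUnion_of_mem ht⟩
    · intro w t _
      exact Set.mem_univ t
  exact (StdTrans.ST_correct hdc hsig φ).1 0 1 0 (fun i => i.elim0) (fun _ => s)
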